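/- arXiv:2603.27374 — 2 statements merged into one kernel-verified Lean document; each statement's English description precedes it below -/
import Mathlib

section
/- Nesting of maximal robust M-step hold control invariant sets: if M̂ divides M, then the maximal robust M-step hold control invariant set is contained in the maximal robust M̂-step hold control invariant set, i.e., C^M_∞ ⊆ C^{M̂}_∞. -/
/-- Robust `M`-step hold precursor set `Pre^M(S, W)`: states from which a single
admissible held input robustly keeps the state in `X` for steps `1,…,M-1` and
drives it into `S` at step `M`, for all disturbances in `W`. -/
def holdPre {n m o : ℕ} (A : Matrix (Fin n) (Fin n) ℝ)
    (B : Matrix (Fin n) (Fin m) ℝ) (E : Matrix (Fin n) (Fin o) ℝ)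
    (X : Set (Fin n → ℝ)) (U : Set (Fin m → ℝ)) (W : Set (Fin o → ℝ))
    (M : ℕ) (S : Set (Fin n → ℝ)) : Set (Fin n → ℝ) :=
  {x0 | ∃ u ∈ U, ∀ w : ℕ → (Fin o → ℝ), (∀ t, w t ∈ W) →
    ∀ x : ℕ → (Fin n → ℝ), x 0 = x0 →
      (∀ t, x (t + 1) = A.mulVec (x t) + B.mulVec u + E.mulVec (w t)) →
      (∀ t, 0 < t → t < M → x t ∈ X) ∧ x M ∈ S}

/-- `C` is robust `M`-step hold control invariant: `C ⊆ X` and from every state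
of `C` there is an admissible held input robustly keeping the state in `X` at
every step and returning it to `C` after `M` steps. -/
def IsMSHCtrlInv {n m o : ℕ} (A : Matrix (Fin n) (Fin n) ℝ)
    (B : Matrix (Fin n) (Fin m) ℝ) (E : Matrix (Fin n) (Fin o) ℝ)
    (X : Set (Fin n → ℝ)) (U : Set (Fin m → ℝ)) (W : Set (Fin o → ℝ))
    (M : ℕ) (C : Set (Fin n → ℝ)) : Prop :=
  C ⊆ X ∧ C ⊆ holdPre A B E X U W M C

/-- Nesting of maximal robust `M`-step hold control invariant sets: if `M̂`
divides `M`, then `C^M_∞ ⊆ C^{M̂}_∞`, where the maximal set is the union of all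
robust `M`-step hold control invariant sets. -/
theorem maximal_mshInv_nested {n m o : ℕ} (A : Matrix (Fin n) (Fin n) ℝ)
    (B : Matrix (Fin n) (Fin m) ℝ) (E : Matrix (Fin n) (Fin o) ℝ)
    (X : Set (Fin n → ℝ)) (U : Set (Fin m → ℝ)) (W : Set (Fin o → ℝ))
    (M Mhat : ℕ) (hM : 0 < M) (hMhat : 0 < Mhat) (hdvd : Mhat ∣ M) :
    ⋃₀ {C | IsMSHCtrlInv A B E X U W M C} ⊆
      ⋃₀ {C | IsMSHCtrlInv A B E X U W Mhat C} := by
  intro x0 hx0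
  obtain ⟨C, ⟨hCX, hCpre⟩, hxC⟩ := hx0
  obtain ⟨q, hq⟩ := hdvd
  have hq0 : 0 < q := by
    rcases Nat.eq_zero_or_pos q with h | h
    · subst h; simp at hq; omega
    · exact h
  -- The auxiliary set: states in X from which some held input robustly reaches C
  -- in k * Mhat steps for some 1 ≤ k ≤ q, staying in X meanwhile.
  set D : Set (Fin n → ℝ) :=
    {y | y ∈ X ∧ ∃ k, 1 ≤ k ∧ k ≤ q ∧ ∃ u ∈ U,
      ∀ w : ℕ → (Fin o → ℝ), (∀ t, w t ∈ W) →
      ∀ x : ℕ → (Fin n → ℝ), x 0 = y →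
        (∀ t, x (t + 1) = A.mulVec (x t) + B.mulVec u + E.mulVec (w t)) →
        (∀ t, 0 < t → t < Mhat * k → x t ∈ X) ∧ x (Mhat * k) ∈ C} with hD
  have hCD : C ⊆ D := by
    intro y hy
    refine ⟨hCX hy, q, hq0, le_refl q, ?_⟩
    obtain ⟨u, hu, h⟩ := hCpre hy
    refine ⟨u, hu, fun w hw x hx0 hdyn => ?_⟩
    have := h w hw x hx0 hdyn
    rwa [← hq]
  refine ⟨D, ⟨fun y hy => hy.1, ?_⟩, hCD hxC⟩
  rintro y ⟨hyX, k, hk1, hkq, u, hu, hP⟩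
  refine ⟨u, hu, fun w hw x hx0 hdyn => ?_⟩
  have hstay := (hP w hw x hx0 hdyn).1
  have hMk : Mhat ≤ Mhat * k := Nat.le_mul_of_pos_right Mhat hk1
  constructor
  · intro t ht htM
    exact hstay t ht (lt_of_lt_of_le htM hMk)
  · rcases eq_or_lt_of_le hk1 with hk | hk2
    · -- k = 1 : after Mhat steps we land in C ⊆ D
      have : x (Mhat * k) ∈ C := (hP w hw x hx0 hdyn).2
      rw [← hk, mul_one] at this
      exact hCD this
    · -- k ≥ 2 : after Mhat steps we can still reach C in (k-1) * Mhat steps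
      have hxMX : x Mhat ∈ X :=
        hstay Mhat hMhat ((Nat.lt_mul_iff_one_lt_right hMhat).2 hk2)
      refine ⟨hxMX, k - 1, by omega, by omega, u, hu, ?_⟩
      intro w' hw' x' hx'0 hdyn'
      -- concatenated disturbance and trajectory
      set w'' : ℕ → (Fin o → ℝ) := fun t => if t < Mhat then w t else w' (t - Mhat) with hw''def
      set x'' : ℕ → (Fin n → ℝ) := fun t => if t < Mhat then x t else x' (t - Mhat) with hx''def
      have hw'' : ∀ t, w'' t ∈ W := by
        intro t; simp only [hw''def]; split
        · exact hw t
        · exact hw' _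
      have hx''0 : x'' 0 = y := by
        simp only [hx''def, if_pos hMhat, hx0]
      have hdyn'' : ∀ t, x'' (t + 1) = A.mulVec (x'' t) + B.mulVec u + E.mulVec (w'' t) := by
        intro t
        rcases lt_or_ge t Mhat with htM | htM
        · rcases lt_or_eq_of_le (Nat.succ_le_of_lt htM) with h1 | h1
          · simp only [hx''def, hw''def, if_pos h1, if_pos htM]
            exact hdyn t
          · simp only [hx''def, hw''def, if_pos htM, if_neg (by omega : ¬ t + 1 < Mhat)]
            have : t + 1 - Mhat = 0 := by omega
            rw [this, hx'0, ← h1]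
            exact hdyn t
        · simp only [hx''def, hw''def, if_neg (by omega : ¬ t + 1 < Mhat),
            if_neg (by omega : ¬ t < Mhat)]
          have h2 : t + 1 - Mhat = (t - Mhat) + 1 := by omega
          rw [h2]
          exact hdyn' (t - Mhat)
      obtain ⟨hX'', hC''⟩ := hP w'' hw'' x'' hx''0 hdyn''
      have hkeq : Mhat * (k - 1) + Mhat = Mhat * k := by
        rw [← Nat.mul_succ]
        congr 1
        omega
      constructor
      · intro s hs hsM
        have hx's : x' s = x'' (s + Mhat) := by
          simp only [hx''def, if_neg (by omega : ¬ s + Mhat < Mhat),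
            Nat.add_sub_cancel]
        rw [hx's]
        exact hX'' (s + Mhat) (by omega) (by omega)
      · have hx'e : x' (Mhat * (k - 1)) = x'' (Mhat * k) := by
          have h3 : Mhat * k - Mhat = Mhat * (k - 1) := by
            rw [← hkeq]; omega
          simp only [hx''def, if_neg (not_lt.2 hMk), h3]
        rw [hx'e]
        exact hC''
end

section
/- Recursive feasibility core step: suppose X_N is robust M-step hold control invariant and x_{t+M} ∈ K^M_N(X_N) ∩ X. Then there exists an admissible held input u ∈ U such that for all disturbance realizations w_k ∈ W_k, the trajectory from x_{t+M} under u satisfies x_{t+M+k} ∈ X for k = 1,…,M−1 and x_{t+2M} ∈ K^M_{N−M}(X_N). In particular, membership in K^M_N(X_N) is preserved every M steps under appropriately chosen held inputs. -/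
/-- Controllable sets indexed by block count: `K^M_{jM}(S)`. -/
def ctrbSet {n m o : ℕ} (A : Matrix (Fin n) (Fin n) ℝ)
    (B : Matrix (Fin n) (Fin m) ℝ) (E : Matrix (Fin n) (Fin o) ℝ)
    (X : Set (Fin n → ℝ)) (U : Set (Fin m → ℝ)) (W : Set (Fin o → ℝ))
    (M : ℕ) (S : Set (Fin n → ℝ)) : ℕ → Set (Fin n → ℝ)
  | 0 => S
  | j + 1 => holdPre A B E X U W M (ctrbSet A B E X U W M S j) ∩ X

lemma holdPre_mono {n m o : ℕ} (A : Matrix (Fin n) (Fin n) ℝ)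
    (B : Matrix (Fin n) (Fin m) ℝ) (E : Matrix (Fin n) (Fin o) ℝ)
    (X : Set (Fin n → ℝ)) (U : Set (Fin m → ℝ)) (W : Set (Fin o → ℝ))
    (M : ℕ) {S T : Set (Fin n → ℝ)} (hST : S ⊆ T) :
    holdPre A B E X U W M S ⊆ holdPre A B E X U W M T := by
  rintro x0 ⟨u, hu, h⟩
  exact ⟨u, hu, fun w hw x hx0 hdyn =>
    ⟨(h w hw x hx0 hdyn).1, hST (h w hw x hx0 hdyn).2⟩⟩

lemma ctrbSet_mono_succ {n m o : ℕ} (A : Matrix (Fin n) (Fin n) ℝ)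
    (B : Matrix (Fin n) (Fin m) ℝ) (E : Matrix (Fin n) (Fin o) ℝ)
    (X : Set (Fin n → ℝ)) (U : Set (Fin m → ℝ)) (W : Set (Fin o → ℝ))
    (M : ℕ) (XN : Set (Fin n → ℝ)) (hXN : XN ⊆ X)
    (hinv : XN ⊆ holdPre A B E X U W M XN) (j : ℕ) :
    ctrbSet A B E X U W M XN j ⊆ ctrbSet A B E X U W M XN (j + 1) := by
  induction j with
  | zero => exact fun x hx => ⟨hinv hx, hXN hx⟩
  | succ j ih =>
    rintro x ⟨hx1, hx2⟩
    exact ⟨holdPre_mono A B E X U W M ih hx1, hx2⟩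

/-- Recursive feasibility core step: if `X_N` is robust `M`-step hold control
invariant and the current state lies in `K^M_N(X_N) ∩ X` (with `N = qM`,
`q ≥ 1`), then there is an admissible held input `u ∈ U` such that, for every
admissible disturbance realization, the resulting trajectory stays in `X` for
steps `1,…,M-1`, lands in `K^M_{N-M}(X_N)` at step `M`, and in particular
remains in `K^M_N(X_N)` at step `M`. -/
theorem recursive_feasibility_core {n m o : ℕ} (A : Matrix (Fin n) (Fin n) ℝ)
    (B : Matrix (Fin n) (Fin m) ℝ) (E : Matrix (Fin n) (Fin o) ℝ)
    (X : Set (Fin n → ℝ)) (U : Set (Fin m → ℝ)) (W : Set (Fin o → ℝ))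
    (M q : ℕ) (hM : 0 < M) (hq : 1 ≤ q)
    (XN : Set (Fin n → ℝ)) (hXN : XN ⊆ X)
    (hinv : XN ⊆ holdPre A B E X U W M XN)
    (x0 : Fin n → ℝ) (hx0 : x0 ∈ ctrbSet A B E X U W M XN q ∩ X) :
    ∃ u ∈ U, ∀ w : ℕ → (Fin o → ℝ), (∀ t, w t ∈ W) →
      ∀ x : ℕ → (Fin n → ℝ), x 0 = x0 →
        (∀ t, x (t + 1) = A.mulVec (x t) + B.mulVec u + E.mulVec (w t)) →
        (∀ t, 0 < t → t < M → x t ∈ X) ∧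
          x M ∈ ctrbSet A B E X U W M XN (q - 1) ∧
          x M ∈ ctrbSet A B E X U W M XN q := by
  obtain ⟨j, rfl⟩ : ∃ j, q = j + 1 := ⟨q - 1, (Nat.succ_pred_eq_of_pos hq).symm⟩
  rw [Set.mem_inter_iff, ctrbSet] at hx0
  obtain ⟨⟨⟨u, hu, h⟩, _⟩, _⟩ := hx0
  refine ⟨u, hu, fun w hw x hx0 hdyn => ?_⟩
  obtain ⟨h1, h2⟩ := h w hw x hx0 hdyn
  simp only [Nat.add_sub_cancel]
  exact ⟨h1, h2, ctrbSet_mono_succ A B E X U W M XN hXN hinv j h2⟩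
end
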